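/- Suppose E₁ ≅ E₂ as holomorphic bundles. Then for any τ > μ(E₁), the triple (E₁, E₂, Φ) is τ-stable if and only if Φ is an isomorphism and E₁ is a stable bundle. -/

import Mathlib

open CategoryTheory CategoryTheory.Limits

noncomputable section

/-- Slope `d/r` of a bundle of degree `d` and rank `r`. -/
def bslope (d : ℤ) (r : ℕ) : ℝ := (d : ℝ) / (r : ℝ)

/-- The quantity `θ_τ(T')` for a subtriple with ranks `r1', r2'` and degrees `d1', d2'`
of a triple with ranks `r1, r2` and degrees `d1, d2`. -/
def thetaTau (τ : ℝ) (r1 r2 : ℕ) (d1 d2 : ℤ) (r1' r2' : ℕ) (d1' d2' : ℤ) : ℝ :=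
  (bslope (d1' + d2') (r1' + r2') - τ) -
    ((r2' : ℝ) / (r2 : ℝ)) * (((r1 : ℝ) + (r2 : ℝ)) / ((r1' : ℝ) + (r2' : ℝ))) *
      (bslope (d1 + d2) (r1 + r2) - τ)

universe v u

variable {C : Type u} [Category.{v} C] [Abelian C]

/-- `(E1', E2')` is a subtriple of `(E1, E2, Φ)` : `Φ` maps `E2'` into `E1'`. -/
def IsSubtriple {E1 E2 : C} (Φ : E2 ⟶ E1) (E1' : Subobject E1) (E2' : Subobject E2) : Prop :=
  E1'.Factors (E2'.arrow ≫ Φ)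

/-- `θ_τ` of a subtriple, expressed through rank and degree functions. -/
def theta (rank : C → ℕ) (deg : C → ℤ) (E1 E2 : C) (τ : ℝ)
    (E1' : Subobject E1) (E2' : Subobject E2) : ℝ :=
  thetaTau τ (rank E1) (rank E2) (deg E1) (deg E2)
    (rank (E1' : C)) (rank (E2' : C)) (deg (E1' : C)) (deg (E2' : C))

/-- τ-stability of the holomorphic triple `(E1, E2, Φ)`. -/
def TStable (rank : C → ℕ) (deg : C → ℤ) (E1 E2 : C) (Φ : E2 ⟶ E1) (τ : ℝ) : Prop :=
  ∀ (E1' : Subobject E1) (E2' : Subobject E2), IsSubtriple Φ E1' E2' →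
    ¬(E1' = ⊥ ∧ E2' = ⊥) → ¬(E1' = ⊤ ∧ E2' = ⊤) →
    theta rank deg E1 E2 τ E1' E2' < 0

/-- τ-semistability of the holomorphic triple `(E1, E2, Φ)`. -/
def TSemistable (rank : C → ℕ) (deg : C → ℤ) (E1 E2 : C) (Φ : E2 ⟶ E1) (τ : ℝ) : Prop :=
  ∀ (E1' : Subobject E1) (E2' : Subobject E2), IsSubtriple Φ E1' E2' →
    ¬(E1' = ⊥ ∧ E2' = ⊥) → ¬(E1' = ⊤ ∧ E2' = ⊤) →
    theta rank deg E1 E2 τ E1' E2' ≤ 0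

/-- Slope stability for a single bundle. -/
def BStable (rank : C → ℕ) (deg : C → ℤ) (B : C) : Prop :=
  ∀ X : Subobject B, X ≠ ⊥ → X ≠ ⊤ →
    bslope (deg (X : C)) (rank (X : C)) < bslope (deg B) (rank B)

/-- Slope semistability for a single bundle. -/
def BSemistable (rank : C → ℕ) (deg : C → ℤ) (B : C) : Prop :=
  ∀ X : Subobject B, X ≠ ⊥ →
    bslope (deg (X : C)) (rank (X : C)) ≤ bslope (deg B) (rank B)

/-! ### Auxiliary lemmas -/

lemma thetaTau_eq_aux (τ : ℝ) (r : ℕ) (hr : 0 < r) (d : ℤ) (r1' r2' : ℕ)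
    (hn : 0 < r1' + r2') (d1' d2' : ℤ) :
    thetaTau τ r r d d r1' r2' d1' d2' =
      (((d1' : ℝ) + (d2' : ℝ)) - 2 * (r2' : ℝ) * ((d : ℝ) / (r : ℝ))
        + ((r2' : ℝ) - (r1' : ℝ)) * τ) / ((r1' : ℝ) + (r2' : ℝ)) := by
  have hr' : (r : ℝ) ≠ 0 := by positivity
  have hn' : (0:ℝ) < (r1' : ℝ) + (r2' : ℝ) := by exact_mod_cast hn
  unfold thetaTau bslope
  push_cast
  field_simp
  ring

lemma thetaTau_neg_iff_aux (τ : ℝ) (r : ℕ) (hr : 0 < r) (d : ℤ) (r1' r2' : ℕ)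
    (hn : 0 < r1' + r2') (d1' d2' : ℤ) :
    thetaTau τ r r d d r1' r2' d1' d2' < 0 ↔
      ((d1' : ℝ) + (d2' : ℝ)) - 2 * (r2' : ℝ) * ((d : ℝ) / (r : ℝ))
        + ((r2' : ℝ) - (r1' : ℝ)) * τ < 0 := by
  have hn' : (0:ℝ) < (r1' : ℝ) + (r2' : ℝ) := by exact_mod_cast hn
  rw [thetaTau_eq_aux τ r hr d r1' r2' hn d1' d2', div_lt_iff₀ hn', zero_mul]

lemma rank_le_of_mono_aux (rank : C → ℕ) (deg : C → ℤ)
    (hrank_add : ∀ (B : C) (X : Subobject B), rank B = rank (X : C) + rank (cokernel X.arrow))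
    (hiso : ∀ A B : C, Nonempty (A ≅ B) → rank A = rank B ∧ deg A = deg B)
    {A B : C} (g : A ⟶ B) [Mono g] : rank A ≤ rank B := by
  have h := hrank_add B (Subobject.mk g)
  have h2 := (hiso _ _ ⟨Subobject.underlyingIso g⟩).1
  omega

lemma arrow_eq_zero_of_eq_bot_aux {B : C} {X : Subobject B} (h : X = ⊥) : X.arrow = 0 := by
  rw [← Subobject.ofLE_arrow h.le, Subobject.bot_arrow, comp_zero]

lemma coker_bot_iso_aux {B : C} {X : Subobject B} (h : X = ⊥) :
    Nonempty (cokernel X.arrow ≅ B) :=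
  ⟨cokernelIsoOfEq (arrow_eq_zero_of_eq_bot_aux h) ≪≫ cokernelZeroIsoTarget⟩

lemma coker_ker_iso_aux {E1 E2 : C} (Φ : E2 ⟶ E1) :
    Nonempty (cokernel (kernelSubobject Φ).arrow ≅ (imageSubobject Φ : C)) :=
  ⟨cokernelIsoOfEq (kernelSubobject_arrow Φ).symm ≪≫
    cokernelEpiComp (kernelSubobjectIso Φ).hom (kernel.ι Φ) ≪≫
    Abelian.coimageIsoImage' Φ ≪≫ (imageSubobjectIso Φ).symm⟩

/-- if `E₁ ≅ E₂`, then for any `τ > μ(E₁)` the triple `(E₁, E₂, Φ)` is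
`τ`-stable iff `Φ` is an isomorphism and `E₁` is a stable bundle. -/
theorem tStable_iff_of_iso
    (rank : C → ℕ) (deg : C → ℤ) (E1 E2 : C) (Φ : E2 ⟶ E1) (τ : ℝ)
    (hrank_bot : ∀ (B : C) (X : Subobject B), X = ⊥ ↔ rank (X : C) = 0)
    (hrank_top : ∀ B : C, rank ((⊤ : Subobject B) : C) = rank B)
    (hdeg_top : ∀ B : C, deg ((⊤ : Subobject B) : C) = deg B)
    (hrank_add : ∀ (B : C) (X : Subobject B), rank B = rank (X : C) + rank (cokernel X.arrow))
    (hdeg_add : ∀ (B : C) (X : Subobject B), deg B = deg (X : C) + deg (cokernel X.arrow))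
    (hiso : ∀ A B : C, Nonempty (A ≅ B) → rank A = rank B ∧ deg A = deg B)
    (h1 : 0 < rank E1) (h2 : 0 < rank E2)
    (e : E1 ≅ E2) (hτ : bslope (deg E1) (rank E1) < τ) :
    TStable rank deg E1 E2 Φ τ ↔ (IsIso Φ ∧ BStable rank deg E1) := by
  obtain ⟨hr12, hd12⟩ := hiso E1 E2 ⟨e⟩
  have hrpos : (0:ℝ) < (rank E1 : ℝ) := by exact_mod_cast h1
  have hr0 : (rank E1 : ℝ) ≠ 0 := ne_of_gt hrpos
  have hμτ : (deg E1 : ℝ) / (rank E1 : ℝ) < τ := hτ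
  have hd' : (deg E1 : ℝ) = (rank E1 : ℝ) * ((deg E1 : ℝ) / (rank E1 : ℝ)) := by
    field_simp
  have hdeg_bot : ∀ (B : C) (X : Subobject B), X = ⊥ → deg (X : C) = 0 := by
    intro B X h
    have ha := hdeg_add B X
    have hb := (hiso _ _ (coker_bot_iso_aux h)).2
    omega
  have hbot_ne_top : ∀ (B : C), 0 < rank B → (⊥ : Subobject B) ≠ (⊤ : Subobject B) := by
    intro B hB h
    have h0 : rank ((⊥ : Subobject B) : C) = 0 := (hrank_bot B ⊥).mp rfl
    rw [h, hrank_top] at h0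
    omega
  have theta_iff : ∀ (A : Subobject E1) (B : Subobject E2),
      0 < rank (A : C) + rank (B : C) →
      (theta rank deg E1 E2 τ A B < 0 ↔
        ((deg (A : C) : ℝ) + (deg (B : C) : ℝ))
          - 2 * (rank (B : C) : ℝ) * ((deg E1 : ℝ) / (rank E1 : ℝ))
          + ((rank (B : C) : ℝ) - (rank (A : C) : ℝ)) * τ < 0) := by
    intro A B hn
    unfold theta
    rw [← hr12, ← hd12]
    exact thetaTau_neg_iff_aux τ _ h1 _ _ _ hn _ _
  have hstE1 : BStable rank deg E1 → ∀ X : Subobject E1, X ≠ ⊥ → X ≠ ⊤ →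
      (deg (X : C) : ℝ) < (rank (X : C) : ℝ) * ((deg E1 : ℝ) / (rank E1 : ℝ)) := by
    intro hst X hb ht'
    have h := hst X hb ht'
    unfold bslope at h
    have hxpos : (0:ℝ) < (rank (X : C) : ℝ) := by
      have : rank (X : C) ≠ 0 := fun hh => hb ((hrank_bot _ _).mpr hh)
      exact_mod_cast Nat.pos_of_ne_zero this
    rw [div_lt_iff₀ hxpos] at h
    linarith
  constructor
  · -- forward
    intro hT
    -- equations from the exact sequence 0 → ker Φ → E2 → im Φ → 0
    have hsum := hrank_add E2 (kernelSubobject Φ)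
    rw [(hiso _ _ (coker_ker_iso_aux Φ)).1] at hsum
    have hsumd := hdeg_add E2 (kernelSubobject Φ)
    rw [(hiso _ _ (coker_ker_iso_aux Φ)).2] at hsumd
    -- the (im Φ, ⊤) subtriple inequality
    have hNsub : IsSubtriple Φ (imageSubobject Φ) ⊤ :=
      imageSubobject_factors_comp_self Φ ((⊤ : Subobject E2).arrow)
    have hBineq : imageSubobject Φ ≠ ⊤ →
        ((deg ((imageSubobject Φ : Subobject E1) : C) : ℝ) + (deg E1 : ℝ))
          - 2 * (rank E1 : ℝ) * ((deg E1 : ℝ) / (rank E1 : ℝ))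
          + ((rank E1 : ℝ) - (rank ((imageSubobject Φ : Subobject E1) : C) : ℝ)) * τ < 0 := by
      intro hN
      have hB := hT (imageSubobject Φ) ⊤ hNsub
        (fun h => (hbot_ne_top E2 h2) h.2.symm) (fun h => hN h.1)
      rw [theta_iff _ _ (by rw [hrank_top]; omega)] at hB
      rw [hrank_top, hdeg_top, ← hr12, ← hd12] at hB
      exact hB
    -- the kernel is trivial
    have hKbot : kernelSubobject Φ = ⊥ := by
      by_contra hK
      have hrK : rank ((kernelSubobject Φ : Subobject E2) : C) ≠ 0 :=
        fun h => hK ((hrank_bot _ _).mpr h)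
      have hsubA : IsSubtriple Φ ⊥ (kernelSubobject Φ) := by
        unfold IsSubtriple
        rw [kernelSubobject_arrow_comp]
        exact Subobject.factors_zero
      have hA := hT ⊥ (kernelSubobject Φ) hsubA
        (fun h => hK h.2) (fun h => hbot_ne_top E1 h1 h.1)
      rw [theta_iff _ _ (by omega)] at hA
      have hb0 : rank ((⊥ : Subobject E1) : C) = 0 := (hrank_bot E1 ⊥).mp rfl
      have hb0' : deg ((⊥ : Subobject E1) : C) = 0 := hdeg_bot E1 ⊥ rfl
      rw [hb0, hb0'] at hA
      push_cast at hA
      have hNne : imageSubobject Φ ≠ ⊤ := by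
        intro h
        rw [h, hrank_top] at hsum
        omega
      have hB := hBineq hNne
      have hrKpos : (0:ℝ) < (rank ((kernelSubobject Φ : Subobject E2) : C) : ℝ) := by
        exact_mod_cast Nat.pos_of_ne_zero hrK
      have hs1 : (rank E1 : ℝ) = (rank ((kernelSubobject Φ : Subobject E2) : C) : ℝ)
          + (rank ((imageSubobject Φ : Subobject E1) : C) : ℝ) := by
        rw [hr12]; exact_mod_cast hsum
      have hs2 : (deg E1 : ℝ) = (deg ((kernelSubobject Φ : Subobject E2) : C) : ℝ)
          + (deg ((imageSubobject Φ : Subobject E1) : C) : ℝ) := by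
        rw [hd12]; exact_mod_cast hsumd
      have h5 : (rank E1 : ℝ) * τ = ((rank ((kernelSubobject Φ : Subobject E2) : C) : ℝ)
          + (rank ((imageSubobject Φ : Subobject E1) : C) : ℝ)) * τ := by rw [hs1]
      have h6 : (rank E1 : ℝ) * ((deg E1 : ℝ) / (rank E1 : ℝ)) =
          ((rank ((kernelSubobject Φ : Subobject E2) : C) : ℝ)
          + (rank ((imageSubobject Φ : Subobject E1) : C) : ℝ))
            * ((deg E1 : ℝ) / (rank E1 : ℝ)) := by rw [hs1]
      nlinarith [mul_pos hrKpos (sub_pos.mpr hμτ), hA, hB, hs2, hd', h5, h6]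
    have hmono : Mono Φ := by
      have h0 : (kernelSubobject Φ).arrow = 0 := arrow_eq_zero_of_eq_bot_aux hKbot
      have hι : kernel.ι Φ = 0 := by rw [← kernelSubobject_arrow', h0, comp_zero]
      exact Abelian.mono_of_kernel_ι_eq_zero _ hι
    have hrK0 : rank ((kernelSubobject Φ : Subobject E2) : C) = 0 :=
      (hrank_bot _ _).mp hKbot
    have hdK0 : deg ((kernelSubobject Φ : Subobject E2) : C) = 0 := hdeg_bot _ _ hKbot
    have hNtop : imageSubobject Φ = ⊤ := by
      by_contra hN
      have hB := hBineq hN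
      have e1 : (rank ((imageSubobject Φ : Subobject E1) : C) : ℝ) = (rank E1 : ℝ) := by
        have : rank ((imageSubobject Φ : Subobject E1) : C) = rank E1 := by omega
        exact_mod_cast this
      have e2 : (deg ((imageSubobject Φ : Subobject E1) : C) : ℝ) = (deg E1 : ℝ) := by
        have : deg ((imageSubobject Φ : Subobject E1) : C) = deg E1 := by omega
        exact_mod_cast this
      rw [e1, e2] at hB
      nlinarith [hB, hd']
    have hepi : Epi Φ := by
      haveI : IsIso (imageSubobject Φ).arrow :=
        (Subobject.isIso_arrow_iff_eq_top _).mpr hNtop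
      rw [← imageSubobject_arrow_comp Φ]
      exact epi_comp _ _
    haveI := hmono
    haveI := hepi
    refine ⟨isIso_of_mono_of_epi Φ, ?_⟩
    -- stability of E1
    intro X hXb hXt
    haveI : IsIso Φ := isIso_of_mono_of_epi Φ
    haveI : Mono (X.arrow ≫ inv Φ) := mono_comp _ _
    have harr : (Subobject.mk (X.arrow ≫ inv Φ)).arrow ≫ Φ =
        (Subobject.underlyingIso (X.arrow ≫ inv Φ)).hom ≫ X.arrow := by
      rw [← Subobject.underlyingIso_hom_comp_eq_mk]
      simp only [Category.assoc, IsIso.inv_hom_id, Category.comp_id]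
    have hsub : IsSubtriple Φ X (Subobject.mk (X.arrow ≫ inv Φ)) := by
      unfold IsSubtriple
      rw [harr]
      exact Subobject.factors_of_factors_right _ (Subobject.factors_self X)
    have hYX := hiso _ _ ⟨Subobject.underlyingIso (X.arrow ≫ inv Φ)⟩
    have hrXne : rank (X : C) ≠ 0 := fun h => hXb ((hrank_bot _ _).mpr h)
    have hθ := hT X (Subobject.mk (X.arrow ≫ inv Φ)) hsub
      (fun h => hXb h.1) (fun h => hXt h.1)
    rw [theta_iff _ _ (by omega)] at hθ
    rw [hYX.1, hYX.2] at hθ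
    have hrXpos : (0:ℝ) < (rank (X : C) : ℝ) := by
      exact_mod_cast Nat.pos_of_ne_zero hrXne
    unfold bslope
    rw [div_lt_iff₀ hrXpos]
    linarith
  · -- converse
    rintro ⟨hΦ, hst⟩ E1' E2' hsub hbot htop
    haveI := hΦ
    have hnpos : 0 < rank (E1' : C) + rank (E2' : C) := by
      have : ¬(rank (E1' : C) = 0 ∧ rank (E2' : C) = 0) :=
        fun ⟨a, b⟩ => hbot ⟨(hrank_bot _ _).mpr a, (hrank_bot _ _).mpr b⟩
      omega
    rw [theta_iff _ _ hnpos]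
    by_cases ht2 : E2' = ⊤
    · exfalso
      haveI : IsIso E2'.arrow := by rw [ht2]; infer_instance
      haveI : IsIso (E2'.arrow ≫ Φ) := IsIso.comp_isIso
      haveI : Epi (E1'.factorThru _ hsub ≫ E1'.arrow) := by
        exact (congrArg Epi (Subobject.factorThru_arrow E1' (E2'.arrow ≫ Φ) hsub)).mpr inferInstance
      haveI : Epi (E1'.arrow) := epi_of_epi (E1'.factorThru _ hsub) _
      haveI : IsIso E1'.arrow := isIso_of_mono_of_epi _
      exact htop ⟨(Subobject.isIso_arrow_iff_eq_top _).mp inferInstance, ht2⟩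
    · have hstE2 : E2' ≠ ⊥ →
          (deg (E2' : C) : ℝ) < (rank (E2' : C) : ℝ) * ((deg E1 : ℝ) / (rank E1 : ℝ)) := by
        intro hb2
        haveI : Mono (E2'.arrow ≫ Φ) := mono_comp _ _
        have hY := hiso _ _ ⟨Subobject.underlyingIso (E2'.arrow ≫ Φ)⟩
        have hYb : Subobject.mk (E2'.arrow ≫ Φ) ≠ ⊥ := by
          intro h
          have h0 := (hrank_bot _ _).mp h
          rw [hY.1] at h0
          exact hb2 ((hrank_bot _ _).mpr h0)
        have hYt : Subobject.mk (E2'.arrow ≫ Φ) ≠ ⊤ := by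
          intro h
          haveI : IsIso (Subobject.mk (E2'.arrow ≫ Φ)).arrow :=
            (Subobject.isIso_arrow_iff_eq_top _).mpr h
          have harr2 : E2'.arrow =
              ((Subobject.underlyingIso (E2'.arrow ≫ Φ)).inv ≫
                (Subobject.mk (E2'.arrow ≫ Φ)).arrow) ≫ inv Φ := by
            rw [Subobject.underlyingIso_arrow, Category.assoc, IsIso.hom_inv_id,
              Category.comp_id]
          have : IsIso E2'.arrow := by rw [harr2]; infer_instance
          exact ht2 ((Subobject.isIso_arrow_iff_eq_top _).mp this)
        have h := hstE1 hst _ hYb hYt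
        rw [hY.1, hY.2] at h
        exact h
      by_cases hb2 : E2' = ⊥
      · have h20 : rank (E2' : C) = 0 := (hrank_bot _ _).mp hb2
        have h2d : deg (E2' : C) = 0 := hdeg_bot _ _ hb2
        rw [h20, h2d]
        push_cast
        have hb1 : E1' ≠ ⊥ := fun h => hbot ⟨h, hb2⟩
        by_cases ht1 : E1' = ⊤
        · have e1 : rank (E1' : C) = rank E1 := by rw [ht1, hrank_top]
          have e2 : deg (E1' : C) = deg E1 := by rw [ht1, hdeg_top]
          rw [e1, e2]
          nlinarith [hd', hrpos, hμτ, mul_pos hrpos (sub_pos.mpr hμτ)]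
        · have h := hstE1 hst E1' hb1 ht1
          have hr1pos : (0:ℝ) < (rank (E1' : C) : ℝ) := by
            have : rank (E1' : C) ≠ 0 := fun hh => hb1 ((hrank_bot _ _).mpr hh)
            exact_mod_cast Nat.pos_of_ne_zero this
          nlinarith [h, mul_pos hr1pos (sub_pos.mpr hμτ)]
      · have hd2 := hstE2 hb2
        have hr2ne : rank (E2' : C) ≠ 0 := fun h => hb2 ((hrank_bot _ _).mpr h)
        by_cases ht1 : E1' = ⊤
        · have e1 : rank (E1' : C) = rank E1 := by rw [ht1, hrank_top]
          have e2 : deg (E1' : C) = deg E1 := by rw [ht1, hdeg_top]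
          rw [e1, e2]
          have hr2le : rank (E2' : C) ≤ rank E2 := by
            have := hrank_add E2 E2'; omega
          have hr2le' : (rank (E2' : C) : ℝ) ≤ (rank E1 : ℝ) := by
            rw [hr12]; exact_mod_cast hr2le
          nlinarith [hd2, hd', mul_nonneg (sub_nonneg.mpr hr2le')
            (le_of_lt (sub_pos.mpr hμτ))]
        · haveI : Mono (E2'.arrow ≫ Φ) := mono_comp _ _
          have hsub' : E1'.Factors (E2'.arrow ≫ Φ) := hsub
          haveI : Mono (E1'.factorThru (E2'.arrow ≫ Φ) hsub') :=
            mono_of_mono_fac (Subobject.factorThru_arrow _ _ hsub')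
          have hle : rank (E2' : C) ≤ rank (E1' : C) :=
            rank_le_of_mono_aux rank deg hrank_add hiso (E1'.factorThru (E2'.arrow ≫ Φ) hsub')
          have hb1 : E1' ≠ ⊥ := by
            intro h
            have h0 := (hrank_bot _ _).mp h
            omega
          have hd1 := hstE1 hst E1' hb1 ht1
          have hle' : (rank (E2' : C) : ℝ) ≤ (rank (E1' : C) : ℝ) := by exact_mod_cast hle
          linarith [hd1, hd2, mul_nonneg (sub_nonneg.mpr hle')
            (le_of_lt (sub_pos.mpr hμτ))]
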